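/- Let 0 < p ≤ 2, let f ∈ H^p(δ²) have atomic decomposition (f_n, R_n)_{n∈ℤ}, and let n ∈ ℤ. Then ∫_{[0,1]²} S(f_n)² dm ≤ 2 · ∫_{[0,1]² ∖ F_{n+1}} S(f_n)² dm. -/

import Mathlib

open MeasureTheory Set
open scoped ENNReal

/-- A dyadic interval `[k/2^n, (k+1)/2^n) ⊆ [0,1)`. -/
structure DyadicInterval where
  n : ℕ
  k : ℕ
  hk : k < 2 ^ n

namespace DyadicInterval

/-- Left endpoint. -/
noncomputable def left (I : DyadicInterval) : ℝ := I.k / 2 ^ I.n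

/-- Right endpoint. -/
noncomputable def right (I : DyadicInterval) : ℝ := (I.k + 1) / 2 ^ I.n

/-- Midpoint. -/
noncomputable def mid (I : DyadicInterval) : ℝ := (I.k + 1 / 2) / 2 ^ I.n

/-- The underlying point set of the dyadic interval. -/
noncomputable def set (I : DyadicInterval) : Set ℝ := Set.Ico I.left I.right

/-- The length `|I| = 2^{-n}`. -/
noncomputable def len (I : DyadicInterval) : ℝ := 1 / 2 ^ I.n

/-- The `L^∞`-normalised Haar function `h_I`: `+1` on the left half of `I`,
`-1` on the right half of `I`, `0` elsewhere. -/
noncomputable def haar (I : DyadicInterval) (s : ℝ) : ℝ :=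
  if s ∈ Set.Ico I.left I.mid then 1
  else if s ∈ Set.Ico I.mid I.right then -1
  else 0

end DyadicInterval

/-- A dyadic rectangle `I × J`. -/
abbrev DyadicRect := DyadicInterval × DyadicInterval

namespace DyadicRect

/-- The underlying point set of the dyadic rectangle. -/
noncomputable def set (R : DyadicRect) : Set (ℝ × ℝ) := R.1.set ×ˢ R.2.set

/-- The area `|I||J|`. -/
noncomputable def area (R : DyadicRect) : ℝ := R.1.len * R.2.len

/-- The 2D Haar function `h_{I×J}(s,t) = h_I(s) h_J(t)`. -/
noncomputable def haar (R : DyadicRect) (x : ℝ × ℝ) : ℝ := R.1.haar x.1 * R.2.haar x.2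

end DyadicRect

/-- The unit square `[0,1]²`. -/
noncomputable def unitSq : Set (ℝ × ℝ) := Set.Icc (0:ℝ) 1 ×ˢ Set.Icc (0:ℝ) 1

/-- The square function `S(f)(s,t) = (∑_{I×J} f_{I×J}² 1_{I×J}(s,t))^{1/2}`,
valued in `ℝ≥0∞`. -/
noncomputable def sqS (f : DyadicRect → ℝ) (x : ℝ × ℝ) : ℝ≥0∞ :=
  (∑' R : DyadicRect, Set.indicator R.set (fun _ => ENNReal.ofReal (f R ^ 2)) x) ^ (1/2 : ℝ)

/-- The `H^p(δ²)` quasi-norm `‖f‖_{H^p} = (∫_{[0,1]²} S(f)^p dm)^{1/p}`, valued in `ℝ≥0∞`.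
Membership `f ∈ H^p(δ²)` is expressed as `Hnorm p f ≠ ∞`. -/
noncomputable def Hnorm (p : ℝ) (f : DyadicRect → ℝ) : ℝ≥0∞ :=
  (∫⁻ x in unitSq, sqS f x ^ p) ^ (1/p)

/-- `‖f‖₂ = ‖f‖_{H²(δ²)} = (∑_{I×J} f_{I×J}² |I||J|)^{1/2}`. -/
noncomputable def l2norm (f : DyadicRect → ℝ) : ℝ≥0∞ :=
  (∑' R : DyadicRect, ENNReal.ofReal (f R ^ 2) * ENNReal.ofReal R.area) ^ (1/2 : ℝ)

/-- The level set `F_n = {(s,t) ∈ [0,1]² : S(f)(s,t) > 2^n}`. -/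
noncomputable def Fset (f : DyadicRect → ℝ) (n : ℤ) : Set (ℝ × ℝ) :=
  {x ∈ unitSq | (2 : ℝ≥0∞) ^ (n : ℝ) < sqS f x}

/-- The collection `R_n` of dyadic rectangles `I×J` with
`|(I×J) ∩ F_n| > |I×J|/2` and `|(I×J) ∩ F_{n+1}| ≤ |I×J|/2`. -/
noncomputable def Rcoll (f : DyadicRect → ℝ) (n : ℤ) : Set DyadicRect :=
  {R | ENNReal.ofReal R.area / 2 < volume (R.set ∩ Fset f n) ∧
       volume (R.set ∩ Fset f (n + 1)) ≤ ENNReal.ofReal R.area / 2}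

/-- The atom `f_n = ∑_{I×J ∈ R_n} f_{I×J} h_{I×J}`, i.e. the coefficient
sequence of `f` restricted to `R_n`. -/
noncomputable def fAtom (f : DyadicRect → ℝ) (n : ℤ) : DyadicRect → ℝ :=
  (Rcoll f n).indicator f

/-- The point set `R_n* = ⋃_{I×J ∈ R_n} I×J`. -/
noncomputable def RcollStar (f : DyadicRect → ℝ) (n : ℤ) : Set (ℝ × ℝ) :=
  ⋃ R ∈ Rcoll f n, R.set

instance : Countable DyadicInterval :=
  Function.Injective.countable (f := fun I : DyadicInterval => (I.n, I.k)) (by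
    rintro ⟨a, b, h⟩ ⟨c, d, h'⟩ he
    simp only [Prod.mk.injEq] at he
    obtain ⟨rfl, rfl⟩ := he
    rfl)

lemma DyadicRect.meas_set (R : DyadicRect) : MeasurableSet R.set :=
  measurableSet_Ico.prod measurableSet_Ico

lemma DyadicRect.volume_set (R : DyadicRect) :
    volume R.set = ENNReal.ofReal R.area := by
  have h1 : ∀ I : DyadicInterval, volume I.set = ENNReal.ofReal I.len := by
    intro I
    rw [DyadicInterval.set, Real.volume_Ico]
    congr 1
    simp [DyadicInterval.left, DyadicInterval.right, DyadicInterval.len]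
    ring
  rw [DyadicRect.set, Measure.volume_eq_prod, MeasureTheory.Measure.prod_prod,
    h1, h1, DyadicRect.area, ← ENNReal.ofReal_mul]
  unfold DyadicInterval.len
  positivity

lemma DyadicRect.set_subset (R : DyadicRect) : R.set ⊆ unitSq := by
  rintro ⟨s, t⟩ ⟨hs, ht⟩
  have key : ∀ (I : DyadicInterval) (x : ℝ), x ∈ I.set → x ∈ Set.Icc (0:ℝ) 1 := by
    rintro I x ⟨h1, h2⟩
    have hl : (0:ℝ) ≤ I.left := by
      unfold DyadicInterval.left; positivity
    have hr : I.right ≤ 1 := by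
      unfold DyadicInterval.right
      rw [div_le_one (by positivity)]
      have := I.hk
      push_cast
      exact_mod_cast Nat.succ_le_of_lt this
    exact ⟨hl.trans h1, (h2.le).trans hr⟩
  exact ⟨key _ _ hs, key _ _ ht⟩

lemma sqS_measurable (f : DyadicRect → ℝ) : Measurable (sqS f) := by
  apply Measurable.pow_const
  exact Measurable.ennreal_tsum fun R =>
    (measurable_const.indicator R.meas_set)

lemma Fset_measurable (f : DyadicRect → ℝ) (n : ℤ) : MeasurableSet (Fset f n) := by
  have hu : MeasurableSet unitSq := measurableSet_Icc.prod measurableSet_Icc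
  have : Fset f n = unitSq ∩ sqS f ⁻¹' Set.Ioi ((2:ℝ≥0∞)^(n:ℝ)) := rfl
  rw [this]
  exact hu.inter ((sqS_measurable f) measurableSet_Ioi)

lemma sq_lintegral_eq (g : DyadicRect → ℝ) (A : Set (ℝ × ℝ)) :
    (∫⁻ x in A, sqS g x ^ (2:ℝ)) =
      ∑' R : DyadicRect, ENNReal.ofReal (g R ^ 2) * volume (R.set ∩ A) := by
  have h1 : ∀ x, sqS g x ^ (2:ℝ) =
      ∑' R : DyadicRect, Set.indicator R.set (fun _ => ENNReal.ofReal (g R ^ 2)) x := by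
    intro x
    rw [sqS, ← ENNReal.rpow_mul]
    norm_num
  simp only [h1]
  rw [lintegral_tsum fun R => (measurable_const.indicator R.meas_set).aemeasurable]
  congr 1
  ext R
  rw [lintegral_indicator R.meas_set, setLIntegral_const,
    MeasureTheory.Measure.restrict_apply R.meas_set]

/-- `∫ S(f_n)² dm ≤ 2 ∫_{[0,1]²∖F_{n+1}} S(f_n)² dm`. -/
theorem atom_square_integral_off_level_set (p : ℝ) (hp0 : 0 < p) (hp2 : p ≤ 2)
    (f : DyadicRect → ℝ) (hf : Hnorm p f ≠ ∞) (n : ℤ) :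
    (∫⁻ x in unitSq, sqS (fAtom f n) x ^ (2:ℝ)) ≤
      2 * ∫⁻ x in unitSq \ Fset f (n + 1), sqS (fAtom f n) x ^ (2:ℝ) := by
  rw [sq_lintegral_eq, sq_lintegral_eq, ← ENNReal.tsum_mul_left]
  apply ENNReal.tsum_le_tsum
  intro R
  by_cases hR : R ∈ Rcoll f n
  · -- key estimate
    rw [← mul_assoc, mul_comm (2:ℝ≥0∞), mul_assoc]
    apply mul_le_mul_right
    have hsub : R.set ∩ unitSq = R.set := Set.inter_eq_self_of_subset_left R.set_subset
    have hsub2 : R.set ∩ (unitSq \ Fset f (n+1)) = R.set \ Fset f (n+1) := by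
      rw [Set.diff_eq, ← Set.inter_assoc, hsub]
      rfl
    rw [hsub, hsub2, R.volume_set]
    set A := ENNReal.ofReal R.area with hA
    have hAfin : A ≠ ∞ := ENNReal.ofReal_ne_top
    have hF : volume (R.set ∩ Fset f (n+1)) ≤ A / 2 := hR.2
    have hsplit : volume (R.set ∩ Fset f (n+1)) + volume (R.set \ Fset f (n+1)) =
        volume R.set := measure_inter_add_diff R.set (Fset_measurable f (n+1))
    have hvol : volume R.set = A := by rw [R.volume_set]
    have h2 : A ≤ A / 2 + volume (R.set \ Fset f (n+1)) := by
      calc A = volume (R.set ∩ Fset f (n+1)) + volume (R.set \ Fset f (n+1)) := by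
              rw [hsplit, hvol]
        _ ≤ A / 2 + volume (R.set \ Fset f (n+1)) := add_le_add_left hF _
    have hhalf : A / 2 ≤ volume (R.set \ Fset f (n+1)) := by
      have hAA : A / 2 + A / 2 = A := ENNReal.add_halves A
      have : A / 2 + A / 2 ≤ A / 2 + volume (R.set \ Fset f (n+1)) := by
        rw [hAA]; exact h2
      have hne : A / 2 ≠ ∞ := ne_top_of_le_ne_top hAfin ENNReal.half_le_self
      exact (ENNReal.add_le_add_iff_left hne).mp this
    calc A = 2 * (A / 2) := by rw [ENNReal.mul_div_cancel (by norm_num) (by norm_num)]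
      _ ≤ 2 * volume (R.set \ Fset f (n+1)) := mul_le_mul_right hhalf 2
  · -- fAtom vanishes
    have : fAtom f n R = 0 := Set.indicator_of_notMem hR f
    simp [this]
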